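/- Let n ≥ 3 and a ≥ 2 be integers, let a₃,…,aₙ be integers with a_i > a for each 3 ≤ i ≤ n, and let 0 < ε < 1. Let X = {z ∈ ℂⁿ : z₁^a + z₂^a + Σ_{i=3}^n z_i^{a_i} = 0} and let Z be the closure in ℂⁿ of the set {z ∈ X : Σ_{i=3}^n |z_i|^{a_i} > ε·(|z₁|^a + |z₂|^a)}. Then the tangent cone of Z at the origin equals {z ∈ ℂⁿ : z₁ = 0 and z₂ = 0}. -/

import Mathlib

open Filter Set Topology

noncomputable def Complex.abs : AbsoluteValue ℂ ℝ :=
  IsAbsoluteValue.toAbsoluteValue (norm : ℂ → ℝ)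

@[simp] lemma Complex.abs_apply_norm (z : ℂ) : Complex.abs z = ‖z‖ := rfl

lemma Complex.norm_eq_abs (z : ℂ) : ‖z‖ = Complex.abs z := rfl

lemma Complex.continuous_abs : Continuous Complex.abs := continuous_norm

theorem stmt_12 (n a : ℕ) (hn : 3 ≤ n) (ha : 2 ≤ a)
    (e : Fin n → ℕ) (he0 : e ⟨0, by omega⟩ = a) (he1 : e ⟨1, by omega⟩ = a)
    (he : ∀ i : Fin n, 2 ≤ (i : ℕ) → a < e i)
    (ε : ℝ) (hε0 : 0 < ε) (hε1 : ε < 1) :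
    tangentConeAt ℝ
      (closure {z : EuclideanSpace ℂ (Fin n) |
        ∑ i, z i ^ e i = 0 ∧
        ε * (‖z ⟨0, by omega⟩‖ ^ a + ‖z ⟨1, by omega⟩‖ ^ a) <
          ∑ i ∈ Finset.univ.filter (fun i : Fin n => 2 ≤ (i : ℕ)),
            ‖z i‖ ^ e i}) 0
      = {z : EuclideanSpace ℂ (Fin n) | z ⟨0, by omega⟩ = 0 ∧ z ⟨1, by omega⟩ = 0} := by
  classical
  have h0n : 0 < n := by omega
  have h1n : 1 < n := by omega
  have h2n : 2 < n := by omega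
  have ha0 : a ≠ 0 := by omega
  set i0 : Fin n := ⟨0, h0n⟩ with hi0def
  set i1 : Fin n := ⟨1, h1n⟩ with hi1def
  set i2 : Fin n := ⟨2, h2n⟩ with hi2def
  have he0' : e i0 = a := he0
  have he1' : e i1 = a := he1
  ext v
  simp only [Set.mem_setOf_eq]
  rw [mem_tangentConeAt_iff_exists_seq_norm_tendsto_atTop]
  constructor
  · rintro ⟨c, d, hc, hd, hcd⟩
    have hsub : closure {z : EuclideanSpace ℂ (Fin n) |
        ∑ i, z i ^ e i = 0 ∧
        ε * (Complex.abs (z i0) ^ a + Complex.abs (z i1) ^ a) <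
          ∑ i ∈ Finset.univ.filter (fun i : Fin n => 2 ≤ (i : ℕ)),
            Complex.abs (z i) ^ e i} ⊆
        {z : EuclideanSpace ℂ (Fin n) |
          ε * (Complex.abs (z i0) ^ a + Complex.abs (z i1) ^ a) ≤
            ∑ i ∈ Finset.univ.filter (fun i : Fin n => 2 ≤ (i : ℕ)),
              Complex.abs (z i) ^ e i} := by
      apply closure_minimal
      · intro z hz
        exact le_of_lt hz.2
      · apply isClosed_le
        · apply Continuous.mul continuous_const
          apply Continuous.add
          · exact ((Complex.continuous_abs.comp (PiLp.continuous_apply 2 _ i0)).pow a)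
          · exact ((Complex.continuous_abs.comp (PiLp.continuous_apply 2 _ i1)).pow a)
        · apply continuous_finset_sum
          intro i _
          exact ((Complex.continuous_abs.comp (PiLp.continuous_apply 2 _ i)).pow (e i))
    have hd0 : Tendsto d atTop (𝓝 0) := tangentConeAt.lim_zero atTop hc hcd
    have hdi : ∀ i : Fin n, Tendsto (fun m => d m i) atTop (𝓝 0) := by
      intro i
      have := ((PiLp.continuous_apply 2 _ i).tendsto (0 : EuclideanSpace ℂ (Fin n))).comp hd0
      exact this
    have hcdi : ∀ i : Fin n, Tendsto (fun m => c m • d m i) atTop (𝓝 (v i)) := by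
      intro i
      have := ((PiLp.continuous_apply 2 _ i).tendsto v).comp hcd
      exact this
    have hkey : ∀ᶠ m in atTop,
        ε * (‖c m • d m i0‖ ^ a + ‖c m • d m i1‖ ^ a) ≤
          ∑ i ∈ Finset.univ.filter (fun i : Fin n => 2 ≤ (i : ℕ)),
            ‖c m • d m i‖ ^ a * ‖d m i‖ ^ (e i - a) := by
      filter_upwards [hd] with m hm
      have hmem := hsub (by simpa using hm)
      simp only [Set.mem_setOf_eq] at hmem
      have hC : (0:ℝ) ≤ ‖c m‖ ^ a := by positivity
      calc ε * (‖c m • d m i0‖ ^ a + ‖c m • d m i1‖ ^ a)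
          = ‖c m‖ ^ a * (ε * (Complex.abs (d m i0) ^ a + Complex.abs (d m i1) ^ a)) := by
            simp only [norm_smul, mul_pow, Complex.norm_eq_abs]
            ring
        _ ≤ ‖c m‖ ^ a * (∑ i ∈ Finset.univ.filter (fun i : Fin n => 2 ≤ (i : ℕ)),
              Complex.abs (d m i) ^ e i) := mul_le_mul_of_nonneg_left hmem hC
        _ = ∑ i ∈ Finset.univ.filter (fun i : Fin n => 2 ≤ (i : ℕ)),
              ‖c m • d m i‖ ^ a * ‖d m i‖ ^ (e i - a) := by
            rw [Finset.mul_sum]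
            apply Finset.sum_congr rfl
            intro i hi
            simp only [Finset.mem_filter] at hi
            have hia : a ≤ e i := le_of_lt (he i hi.2)
            simp only [norm_smul, mul_pow, Complex.norm_eq_abs]
            rw [mul_assoc, ← pow_add]
            congr 2
            omega
    have hlhs : Tendsto (fun m => ε * (‖c m • d m i0‖ ^ a + ‖c m • d m i1‖ ^ a)) atTop
        (𝓝 (ε * (‖v i0‖ ^ a + ‖v i1‖ ^ a))) :=
      Tendsto.const_mul _ (((hcdi i0).norm.pow a).add ((hcdi i1).norm.pow a))
    have hrhs : Tendsto (fun m => ∑ i ∈ Finset.univ.filter (fun i : Fin n => 2 ≤ (i : ℕ)),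
        ‖c m • d m i‖ ^ a * ‖d m i‖ ^ (e i - a)) atTop (𝓝 0) := by
      have h1 : Tendsto (fun m => ∑ i ∈ Finset.univ.filter (fun i : Fin n => 2 ≤ (i : ℕ)),
          ‖c m • d m i‖ ^ a * ‖d m i‖ ^ (e i - a)) atTop
          (𝓝 (∑ i ∈ Finset.univ.filter (fun i : Fin n => 2 ≤ (i : ℕ)),
            ‖v i‖ ^ a * ‖(0:ℂ)‖ ^ (e i - a))) := by
        apply tendsto_finset_sum
        intro i hi
        exact (((hcdi i).norm.pow a).mul ((hdi i).norm.pow (e i - a)))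
      convert h1 using 2
      rw [eq_comm, Finset.sum_eq_zero]
      intro i hi
      simp only [Finset.mem_filter] at hi
      have hne : e i - a ≠ 0 := by have := he i hi.2; omega
      rw [norm_zero, zero_pow hne, mul_zero]
    have hfin : ε * (‖v i0‖ ^ a + ‖v i1‖ ^ a) ≤ 0 :=
      le_of_tendsto_of_tendsto hlhs hrhs hkey
    have h00 : ‖v i0‖ ^ a = 0 ∧ ‖v i1‖ ^ a = 0 := by
      constructor <;>
        nlinarith [pow_nonneg (norm_nonneg (v i0)) a, pow_nonneg (norm_nonneg (v i1)) a]
    constructor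
    · have := pow_eq_zero_iff ha0 |>.1 h00.1
      simpa using this
    · have := pow_eq_zero_iff ha0 |>.1 h00.2
      simpa using this
  · rintro ⟨hv0', hv1'⟩
    have hv0 : v i0 = 0 := hv0'
    have hv1 : v i1 = 0 := hv1'
    -- the constant K
    obtain ⟨K, hK1, hKv⟩ : ∃ K : ℝ, 1 ≤ K ∧ ∀ i : Fin n, Complex.abs (v i) ≤ K - 1 := by
      refine ⟨1 + ∑ j, Complex.abs (v j), ?_, ?_⟩
      · have : (0:ℝ) ≤ ∑ j, Complex.abs (v j) :=
          Finset.sum_nonneg fun j _ => AbsoluteValue.nonneg _ _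
        linarith
      · intro i
        have h1 : Complex.abs (v i) ≤ ∑ j, Complex.abs (v j) :=
          Finset.single_le_sum (f := fun j => Complex.abs (v j))
            (fun j _ => AbsoluteValue.nonneg _ _) (Finset.mem_univ i)
        linarith
    -- the tail sequence u
    obtain ⟨u, hult, hui2, huoth⟩ :
        ∃ u : ℕ → Fin n → ℂ,
          (∀ m, ∀ i : Fin n, (i:ℕ) < 2 → u m i = 0) ∧
          (∀ m, u m i2 = ((m:ℂ))⁻¹ * (v i2 + ((m:ℂ))⁻¹)) ∧
          (∀ m, ∀ i : Fin n, 2 ≤ (i:ℕ) → i ≠ i2 → u m i = ((m:ℂ))⁻¹ * v i) := by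
      refine ⟨fun m i => if (i:ℕ) < 2 then 0 else if i = i2 then
        ((m:ℂ))⁻¹ * (v i2 + ((m:ℂ))⁻¹) else ((m:ℂ))⁻¹ * v i, ?_, ?_, ?_⟩
      · intro m i h; simp [h]
      · intro m
        have h2 : ¬ ((i2:ℕ) < 2) := by simp [hi2def]
        simp [h2]
      · intro m i h1 h2
        have h1' : ¬ ((i:ℕ) < 2) := by omega
        simp [h1', h2]
    -- bound on u
    have humem : ∀ m : ℕ, 1 ≤ m → ∀ i : Fin n, Complex.abs (u m i) ≤ (m:ℝ)⁻¹ * K := by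
      intro m hm i
      have hm0 : (0:ℝ) < m := by exact_mod_cast hm
      have hminv : (0:ℝ) ≤ (m:ℝ)⁻¹ := by positivity
      have habsinv : Complex.abs ((m:ℂ))⁻¹ = (m:ℝ)⁻¹ := by
        rw [map_inv₀]; simp
      by_cases h1 : (i:ℕ) < 2
      · rw [hult m i h1, map_zero]
        positivity
      · push_neg at h1
        by_cases h2 : i = i2
        · rw [h2, hui2 m, map_mul, habsinv]
          apply mul_le_mul_of_nonneg_left _ hminv
          calc Complex.abs (v i2 + ((m:ℂ))⁻¹)
              ≤ Complex.abs (v i2) + Complex.abs ((m:ℂ))⁻¹ := AbsoluteValue.add_le _ _ _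
            _ ≤ (K - 1) + 1 := by
                apply add_le_add (hKv i2)
                rw [habsinv, inv_le_one_iff₀]
                right; exact_mod_cast hm
            _ = K := by ring
        · rw [huoth m i h1 h2, map_mul, habsinv]
          apply mul_le_mul_of_nonneg_left _ hminv
          linarith [hKv i]
    -- the defect w and roots r
    set w : ℕ → ℂ := fun m =>
      ∑ i ∈ Finset.univ.filter (fun i : Fin n => 2 ≤ (i : ℕ)), u m i ^ e i with hw
    have hroot : ∀ m : ℕ, ∃ z : ℂ, z ^ a = -(w m) := fun m =>
      IsAlgClosed.exists_pow_nat_eq _ (by omega)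
    choose r hr using hroot
    -- bound on w
    have hwbound : ∀ m : ℕ, K ≤ m → Complex.abs (w m) ≤ n * ((m:ℝ)⁻¹ * K) ^ (a + 1) := by
      intro m hm
      have hm1 : 1 ≤ m := by
        have h1 : (1:ℝ) ≤ m := le_trans hK1 hm
        exact_mod_cast h1
      have hm0 : (0:ℝ) < m := by exact_mod_cast hm1
      have hq0 : (0:ℝ) ≤ (m:ℝ)⁻¹ * K := by positivity
      have hq1 : (m:ℝ)⁻¹ * K ≤ 1 := by
        rw [inv_mul_le_iff₀ hm0, mul_one]; exact hm
      calc Complex.abs (w m)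
          ≤ ∑ i ∈ Finset.univ.filter (fun i : Fin n => 2 ≤ (i : ℕ)),
            Complex.abs (u m i ^ e i) := AbsoluteValue.sum_le _ _ _
        _ ≤ ∑ _i ∈ Finset.univ.filter (fun i : Fin n => 2 ≤ (i : ℕ)),
            ((m:ℝ)⁻¹ * K) ^ (a + 1) := by
            apply Finset.sum_le_sum
            intro i hi
            simp only [Finset.mem_filter] at hi
            rw [map_pow]
            calc Complex.abs (u m i) ^ e i ≤ ((m:ℝ)⁻¹ * K) ^ e i :=
                  pow_le_pow_left₀ (AbsoluteValue.nonneg _ _) (humem m hm1 i) (e i)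
              _ ≤ ((m:ℝ)⁻¹ * K) ^ (a + 1) := by
                  apply pow_le_pow_of_le_one hq0 hq1
                  have := he i hi.2; omega
        _ ≤ n * ((m:ℝ)⁻¹ * K) ^ (a + 1) := by
            rw [Finset.sum_const, nsmul_eq_mul]
            apply mul_le_mul_of_nonneg_right _ (by positivity)
            have hcard := Finset.card_filter_le (Finset.univ : Finset (Fin n))
              (fun i : Fin n => 2 ≤ (i:ℕ))
            simp only [Finset.card_univ, Fintype.card_fin] at hcard
            exact_mod_cast hcard
    -- the sequence d
    obtain ⟨d, hdi0, hdoth⟩ :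
        ∃ d : ℕ → EuclideanSpace ℂ (Fin n),
          (∀ m, d m i0 = r m) ∧ (∀ m, ∀ i : Fin n, i ≠ i0 → d m i = u m i) := by
      refine ⟨fun m => WithLp.toLp 2 (fun i => if i = i0 then r m else u m i), fun m => (if_pos rfl : (if i0 = i0 then r m else u m i0) = r m), ?_⟩
      intro m i hi
      exact if_neg hi
    have hdu : ∀ m, ∀ i : Fin n, 2 ≤ (i:ℕ) → d m i = u m i := by
      intro m i hi
      apply hdoth
      intro hx
      rw [hx] at hi
      simp [hi0def] at hi
    have hd1 : ∀ m, d m i1 = 0 := by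
      intro m
      rw [hdoth m i1 (by simp [hi0def, hi1def, Fin.ext_iff]), hult m i1 (by simp [hi1def])]
    refine ⟨fun m => (m:ℝ), d, ?_, ?_, ?_⟩
    pick_goal 2
    · -- eventual membership
      have hev2 : ∀ᶠ m : ℕ in atTop, v i2 + ((m:ℂ))⁻¹ ≠ 0 := by
        by_cases h : v i2 = 0
        · filter_upwards [eventually_ge_atTop 1] with m hm
          rw [h, zero_add]
          simp
          omega
        · have hv2 : 0 < Complex.abs (v i2) := by
            simpa [AbsoluteValue.pos_iff] using h
          filter_upwards [eventually_gt_atTop ⌈(Complex.abs (v i2))⁻¹⌉₊] with m hm hcon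
          have h1 : Complex.abs (v i2) = (m:ℝ)⁻¹ := by
            have hx : v i2 = -((m:ℂ))⁻¹ := by linear_combination hcon
            rw [hx, map_neg_eq_map, map_inv₀]
            simp
          have h2 : (Complex.abs (v i2))⁻¹ < m :=
            lt_of_le_of_lt (Nat.le_ceil _) (by exact_mod_cast hm)
          rw [h1, inv_inv] at h2
          exact lt_irrefl _ h2
      filter_upwards [hev2, eventually_ge_atTop 1] with m hm2 hm1
      have hmC : ((m:ℂ)) ≠ 0 := by
        simp; omega
      have hu2 : u m i2 ≠ 0 := by
        rw [hui2 m]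
        exact mul_ne_zero (inv_ne_zero hmC) hm2
      rw [zero_add]
      have hmm : d m ∈ {z : EuclideanSpace ℂ (Fin n) |
          ∑ i, z i ^ e i = 0 ∧
          ε * (Complex.abs (z i0) ^ a + Complex.abs (z i1) ^ a) <
            ∑ i ∈ Finset.univ.filter (fun i : Fin n => 2 ≤ (i : ℕ)),
              Complex.abs (z i) ^ e i} := by
        constructor
        · have hsplit := Finset.sum_filter_add_sum_filter_not Finset.univ
            (fun i : Fin n => 2 ≤ (i : ℕ)) (fun i => d m i ^ e i)
          have hpair : Finset.univ.filter (fun i : Fin n => ¬ 2 ≤ (i : ℕ)) = {i0, i1} := by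
            ext i
            simp only [Finset.mem_filter, Finset.mem_univ, true_and, Finset.mem_insert,
              Finset.mem_singleton, hi0def, hi1def, Fin.ext_iff]
            omega
          have h01 : i0 ≠ i1 := by simp [hi0def, hi1def, Fin.ext_iff]
          have hsum1 : ∑ i ∈ Finset.univ.filter (fun i : Fin n => 2 ≤ (i : ℕ)),
              d m i ^ e i = w m := by
            apply Finset.sum_congr rfl
            intro i hi
            simp only [Finset.mem_filter] at hi
            rw [hdu m i hi.2]
          rw [← hsplit, hpair, Finset.sum_pair h01, hsum1, hdi0, hd1, he0', he1',
            hr m, zero_pow ha0]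
          ring
        · rw [hdi0, hd1]
          have habs0 : Complex.abs (r m) ^ a = Complex.abs (w m) := by
            rw [← map_pow, hr m, map_neg_eq_map]
          have hsum2 : ∑ i ∈ Finset.univ.filter (fun i : Fin n => 2 ≤ (i : ℕ)),
              Complex.abs (d m i) ^ e i =
            ∑ i ∈ Finset.univ.filter (fun i : Fin n => 2 ≤ (i : ℕ)),
              Complex.abs (u m i) ^ e i := by
            apply Finset.sum_congr rfl
            intro i hi
            simp only [Finset.mem_filter] at hi
            rw [hdu m i hi.2]
          have hwle : Complex.abs (w m) ≤
              ∑ i ∈ Finset.univ.filter (fun i : Fin n => 2 ≤ (i : ℕ)),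
                Complex.abs (u m i) ^ e i := by
            calc Complex.abs (w m) ≤ ∑ i ∈ Finset.univ.filter (fun i : Fin n => 2 ≤ (i : ℕ)),
                Complex.abs (u m i ^ e i) := AbsoluteValue.sum_le _ _ _
              _ = _ := by simp [map_pow]
          have hpos : 0 < ∑ i ∈ Finset.univ.filter (fun i : Fin n => 2 ≤ (i : ℕ)),
              Complex.abs (u m i) ^ e i := by
            apply Finset.sum_pos' (fun i _ => by positivity)
            refine ⟨i2, by simp [hi2def], ?_⟩
            apply pow_pos
            simpa [AbsoluteValue.pos_iff] using hu2
          rw [hsum2, habs0, map_zero, zero_pow ha0]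
          nlinarith
      exact subset_closure hmm
    · -- norms tend to infinity
      have h1 : Tendsto (fun m : ℕ => (m:ℝ)) atTop atTop := tendsto_natCast_atTop_atTop
      apply h1.congr
      intro m
      simp
    · -- convergence to v
      rw [(PiLp.homeomorph 2 (fun _ : Fin n => ℂ)).isInducing.tendsto_nhds_iff, tendsto_pi_nhds]
      intro i
      change Tendsto (fun m : ℕ => ((m:ℝ) • d m) i) atTop (𝓝 (v i))
      have hsmul : ∀ (m : ℕ) (z : ℂ), (m:ℝ) • z = (m:ℂ) * z := by
        intro m z
        rw [Complex.real_smul, Complex.ofReal_natCast]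
      have happ : ∀ m : ℕ, ((m:ℝ) • d m) i = (m:ℝ) • d m i := fun m => rfl
      have hinvC : Tendsto (fun m : ℕ => ((m:ℂ))⁻¹) atTop (𝓝 0) := by
        rw [tendsto_zero_iff_norm_tendsto_zero]
        have := tendsto_inv_atTop_zero.comp (tendsto_natCast_atTop_atTop (R := ℝ))
        apply this.congr
        intro m
        simp [Function.comp]
      by_cases hii0 : i = i0
      · subst hii0
        simp only [happ, hdi0, hv0]
        -- show m • r m → 0
        rw [tendsto_zero_iff_norm_tendsto_zero]
        have hf : ∀ m : ℕ, ‖(m:ℝ) • r m‖ = (m:ℝ) * ‖r m‖ := by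
          intro m; rw [norm_smul, Real.norm_natCast]
        have hf0 : ∀ m : ℕ, (0:ℝ) ≤ (m:ℝ) * ‖r m‖ := fun m => by positivity
        have hpow : Tendsto (fun m : ℕ => ((m:ℝ) * ‖r m‖) ^ a) atTop (𝓝 0) := by
          apply squeeze_zero' (Eventually.of_forall (fun m => by positivity))
            (g := fun m : ℕ => (n * K ^ (a+1)) * (m:ℝ)⁻¹)
          · filter_upwards [eventually_ge_atTop ⌈K⌉₊] with m hm
            have hmK : K ≤ m := le_trans (Nat.le_ceil _) (by exact_mod_cast hm)
            have hm1 : 1 ≤ m := by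
              have h1 : (1:ℝ) ≤ m := le_trans hK1 hmK
              exact_mod_cast h1
            have hm0 : (0:ℝ) < m := by exact_mod_cast hm1
            have hra : ‖r m‖ ^ a = Complex.abs (w m) := by
              rw [← norm_pow, hr m, norm_neg, Complex.norm_eq_abs]
            calc ((m:ℝ) * ‖r m‖) ^ a = (m:ℝ) ^ a * Complex.abs (w m) := by
                  rw [mul_pow, hra]
              _ ≤ (m:ℝ) ^ a * (n * ((m:ℝ)⁻¹ * K) ^ (a + 1)) :=
                  mul_le_mul_of_nonneg_left (hwbound m hmK) (by positivity)
              _ = (n * K ^ (a+1)) * (m:ℝ)⁻¹ := by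
                  rw [mul_pow]
                  have hmm : (m:ℝ) ^ a * ((m:ℝ)⁻¹) ^ (a + 1) = (m:ℝ)⁻¹ := by
                    rw [pow_succ, ← mul_assoc, ← mul_pow, mul_inv_cancel₀ (ne_of_gt hm0),
                      one_pow, one_mul]
                  linear_combination ((n:ℝ) * K ^ (a+1)) * hmm
          · have hinvR : Tendsto (fun m : ℕ => ((m:ℝ))⁻¹) atTop (𝓝 0) :=
              tendsto_inv_atTop_zero.comp (tendsto_natCast_atTop_atTop (R := ℝ))
            have h2 := Tendsto.const_mul ((n:ℝ) * K ^ (a+1)) hinvR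
            simpa using h2
        have hff : Tendsto (fun m : ℕ => (m:ℝ) * ‖r m‖) atTop (𝓝 0) := by
          have h1 : Tendsto (fun m : ℕ => (((m:ℝ) * ‖r m‖) ^ a) ^ ((a:ℝ)⁻¹)) atTop
              (𝓝 ((0:ℝ) ^ ((a:ℝ)⁻¹))) :=
            hpow.rpow_const (Or.inr (by positivity))
          rw [Real.zero_rpow (by positivity)] at h1
          apply h1.congr
          intro m
          rw [← Real.rpow_natCast ((m:ℝ) * ‖r m‖) a, ← Real.rpow_mul (hf0 m),
            mul_inv_cancel₀ (by exact_mod_cast ha0), Real.rpow_one]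
        apply hff.congr
        intro m
        rw [hf m]
      · by_cases hlt : (i:ℕ) < 2
        · have hii1 : i = i1 := by
            rw [hi1def, Fin.ext_iff]
            rw [hi0def, Fin.ext_iff] at hii0
            simp at hii0 ⊢
            omega
          subst hii1
          simp only [happ, hd1, hv1, smul_zero]
          exact tendsto_const_nhds
        · push_neg at hlt
          by_cases hii2 : i = i2
          · subst hii2
            have hten : Tendsto (fun m : ℕ => v i2 + ((m:ℂ))⁻¹) atTop (𝓝 (v i2)) := by
              have h3 := (tendsto_const_nhds (x := v i2) (f := (atTop : Filter ℕ))).add hinvC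
              simpa using h3
            apply hten.congr'
            filter_upwards [eventually_ge_atTop 1] with m hm
            have hmC : ((m:ℂ)) ≠ 0 := by simp; omega
            rw [happ, hdoth m i2 (by simp [hi0def, hi2def, Fin.ext_iff]), hui2 m, hsmul,
              ← mul_assoc, mul_inv_cancel₀ hmC, one_mul]
          · have heq : ∀ᶠ m : ℕ in atTop, v i = ((m:ℝ) • d m) i := by
              filter_upwards [eventually_ge_atTop 1] with m hm
              have hmC : ((m:ℂ)) ≠ 0 := by simp; omega
              rw [happ, hdoth m i hii0, huoth m i hlt hii2, hsmul,
                ← mul_assoc, mul_inv_cancel₀ hmC, one_mul]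
            exact tendsto_const_nhds.congr' heq
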